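/- arXiv:1506.01213 — 2 statements merged into one kernel-verified Lean document; each statement's English description precedes it below -/
import Mathlib

section
/- Decoherence of off-diagonal blocks: in the non-demolition measurement model with C_ξ = Σ_ν c_ξ(ν)Π_ν and distinct distributions p(·|ν), for every ν ≠ ν' the off-diagonal block Π_ν ρ^{(k)}(ξ_1,…,ξ_k) Π_{ν'} converges to 0 in norm μ_ω-almost surely as k → ∞, where μ_ω is the probability measure on infinite protocols generated by μ_ω(ξ_1,…,ξ_k) = Tr(C_{ξ_k}⋯C_{ξ_1}ρ⁰C_{ξ_1}*⋯C_{ξ_k}*). -/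
open Matrix MeasureTheory Filter
open scoped BigOperators ComplexOrder Topology

/-- The trace norm `‖A‖₁ = Tr √(AᴴA)` of a complex matrix. -/
noncomputable def traceNorm {m : Type*} [Fintype m] [DecidableEq m] (A : Matrix m m ℂ) : ℝ :=
  (((Matrix.posSemidef_conjTranspose_mul_self A).1.cfc Real.sqrt).trace).re

/-- The Kraus operator `C_ξ = ∑_ν c_ξ(ν) P_ν`. -/
noncomputable def krausOp {σ N m : Type*} [Fintype N] [Fintype m] [DecidableEq m]
    (c : σ → N → ℂ) (P : N → Matrix m m ℂ) (ξ : σ) : Matrix m m ℂ :=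
  ∑ ν, c ξ ν • P ν

/-- The ordered product `C_{ξ_k} ⋯ C_{ξ_1}` along a protocol `(ξ_1, …, ξ_k)`. -/
noncomputable def ordProd {σ m : Type*} [Fintype m] [DecidableEq m]
    (C : σ → Matrix m m ℂ) {k : ℕ} (ξs : Fin k → σ) : Matrix m m ℂ :=
  ((List.ofFn fun i => C (ξs i)).reverse).prod

/-- The (normalized) posterior state after the protocol `ξs` (by convention `0` when the
protocol has probability `0`). -/
noncomputable def posterior {σ N m : Type*} [Fintype N] [Fintype m] [DecidableEq m]
    (c : σ → N → ℂ) (P : N → Matrix m m ℂ) (ρ : Matrix m m ℂ)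
    {k : ℕ} (ξs : Fin k → σ) : Matrix m m ℂ :=
  (((ordProd (krausOp c P) ξs * ρ * (ordProd (krausOp c P) ξs)ᴴ).trace).re)⁻¹ •
    (ordProd (krausOp c P) ξs * ρ * (ordProd (krausOp c P) ξs)ᴴ)

set_option linter.unusedSectionVars false

section auxTraceNorm
open scoped MatrixOrder
variable {m : Type*} [Fintype m] [DecidableEq m]

lemma re_trace_nonneg {S : Matrix m m ℂ} (hS : S.PosSemidef) : 0 ≤ S.trace.re := by
  exact (Complex.nonneg_iff.mp hS.trace_nonneg).1

lemma posSemidef_smul' {S : Matrix m m ℂ} (hS : S.PosSemidef) {r : ℝ} (hr : 0 ≤ r) :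
    (((r : ℂ)) • S).PosSemidef := by
  exact hS.smul (Complex.zero_le_real.mpr hr)

lemma cfc_sqrt_eq {S : Matrix m m ℂ} (hS : S.PosSemidef) :
    hS.1.cfc Real.sqrt = CFC.sqrt S := by
  rw [CFC.sqrt_eq_cfc, cfc_nnreal_eq_real _ S hS.nonneg, hS.1.cfc_eq]
  congr 1
  funext x
  simp [Real.coe_sqrt, Real.coe_toNNReal']
  rcases le_total x 0 with h | h
  · rw [max_eq_right h, Real.sqrt_zero, Real.sqrt_eq_zero'.mpr h]
  · rw [max_eq_left h]

lemma traceNorm_nonneg (A : Matrix m m ℂ) : 0 ≤ traceNorm A :=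
  by
  unfold traceNorm
  rw [cfc_sqrt_eq (Matrix.posSemidef_conjTranspose_mul_self A)]
  exact re_trace_nonneg (CFC.sqrt_nonneg _).posSemidef

lemma traceNorm_smul (z : ℂ) (A : Matrix m m ℂ) :
    traceNorm (z • A) = ‖z‖ * traceNorm A := by
  have hS := Matrix.posSemidef_conjTranspose_mul_self A
  have hzS := Matrix.posSemidef_conjTranspose_mul_self (z • A)
  have key : (z • A)ᴴ * (z • A) = ((‖z‖ ^ 2 : ℝ) : ℂ) • (Aᴴ * A) := by
    rw [Matrix.conjTranspose_smul, Matrix.smul_mul, Matrix.mul_smul, smul_smul]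
    congr 1
    rw [Complex.star_def, ← Complex.normSq_eq_conj_mul_self, Complex.sq_norm]
  have hpos : (((‖z‖ : ℝ) : ℂ) • CFC.sqrt (Aᴴ * A)).PosSemidef :=
    posSemidef_smul' (CFC.sqrt_nonneg _).posSemidef (norm_nonneg z)
  have hsq : (((‖z‖ : ℝ) : ℂ) • CFC.sqrt (Aᴴ * A)) ^ 2 = (z • A)ᴴ * (z • A) := by
    rw [key, pow_two, Matrix.smul_mul, Matrix.mul_smul, smul_smul, ← Complex.ofReal_mul,
      ← pow_two, ← pow_two, CFC.sq_sqrt (Aᴴ * A) hS.nonneg]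
  have heq := CFC.sqrt_unique (a := (z • A)ᴴ * (z • A)) (by rw [← pow_two]; exact hsq) hpos.nonneg
  unfold traceNorm
  rw [cfc_sqrt_eq hzS, cfc_sqrt_eq hS, heq, Matrix.trace_smul, smul_eq_mul, Complex.re_ofReal_mul]

lemma traceNorm_real_smul (r : ℝ) (A : Matrix m m ℂ) :
    traceNorm (r • A) = |r| * traceNorm A := by
  have h : (r • A) = ((r : ℂ)) • A := by
    ext i j
    simp [Complex.real_smul]
  rw [h, traceNorm_smul, Complex.norm_real, Real.norm_eq_abs]

end auxTraceNorm

section auxSpectral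
variable {σ N m : Type*} [Fintype N] [DecidableEq N] [Fintype m] [DecidableEq m]
variable (c : σ → N → ℂ) (P : N → Matrix m m ℂ)

lemma spectral_mul (horth : ∀ ν ν', P ν * P ν' = if ν = ν' then P ν else 0)
    (a b : N → ℂ) :
    (∑ ν, a ν • P ν) * (∑ ν, b ν • P ν) = ∑ ν, (a ν * b ν) • P ν := by
  rw [Finset.sum_mul]
  refine Finset.sum_congr rfl fun ν _ => ?_
  rw [Finset.mul_sum]
  have : ∀ ν' ∈ Finset.univ, (a ν • P ν) * (b ν' • P ν') =
      if ν' = ν then (a ν * b ν) • P ν else 0 := by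
    intro ν' _
    rw [Matrix.smul_mul, Matrix.mul_smul, horth, smul_smul]
    by_cases h : ν = ν' <;> simp [h, eq_comm, mul_comm]
  rw [Finset.sum_congr rfl this, Finset.sum_ite_eq' Finset.univ ν]
  simp

lemma proj_mul_spectral (horth : ∀ ν ν', P ν * P ν' = if ν = ν' then P ν else 0)
    (a : N → ℂ) (ν : N) : P ν * (∑ ν', a ν' • P ν') = a ν • P ν := by
  rw [Finset.mul_sum]
  have : ∀ ν' ∈ Finset.univ, P ν * (a ν' • P ν') = if ν' = ν then a ν • P ν else 0 := by
    intro ν' _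
    rw [Matrix.mul_smul, horth]
    by_cases h : ν = ν' <;> simp [h, eq_comm]
  rw [Finset.sum_congr rfl this, Finset.sum_ite_eq' Finset.univ ν]
  simp

lemma spectral_conjTranspose (hherm : ∀ ν, (P ν)ᴴ = P ν) (a : N → ℂ) :
    (∑ ν, a ν • P ν)ᴴ = ∑ ν, star (a ν) • P ν := by
  rw [Matrix.conjTranspose_sum]
  exact Finset.sum_congr rfl fun ν _ => by rw [Matrix.conjTranspose_smul, hherm]

lemma ordProd_eq (horth : ∀ ν ν', P ν * P ν' = if ν = ν' then P ν else 0)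
    (hsum : ∑ ν, P ν = 1) :
    ∀ {k : ℕ} (ξs : Fin k → σ),
      ordProd (krausOp c P) ξs = ∑ ν, (∏ i, c (ξs i) ν) • P ν := by
  intro k
  induction k with
  | zero =>
    intro ξs
    simp [ordProd, hsum]
  | succ n ih =>
    intro ξs
    have h1 : ordProd (krausOp c P) ξs =
        ordProd (krausOp c P) (fun i : Fin n => ξs i.succ) * krausOp c P (ξs 0) := by
      unfold ordProd
      rw [List.ofFn_succ, List.reverse_cons, List.prod_append]
      simp
    rw [h1, ih, krausOp, spectral_mul P horth]
    refine Finset.sum_congr rfl fun ν _ => ?_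
    rw [Fin.prod_univ_succ, mul_comm]

lemma block_formula (hherm : ∀ ν, (P ν)ᴴ = P ν)
    (horth : ∀ ν ν', P ν * P ν' = if ν = ν' then P ν else 0)
    (hsum : ∑ ν, P ν = 1) (ρ : Matrix m m ℂ) {k : ℕ} (ξs : Fin k → σ) (ν ν' : N) :
    P ν * (ordProd (krausOp c P) ξs * ρ * (ordProd (krausOp c P) ξs)ᴴ) * P ν' =
      ((∏ i, c (ξs i) ν) * star (∏ i, c (ξs i) ν')) • (P ν * ρ * P ν') := by
  have hAeq := ordProd_eq c P horth hsum ξs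
  obtain ⟨A, hA⟩ : ∃ A, A = ordProd (krausOp c P) ξs := ⟨_, rfl⟩
  rw [← hA] at hAeq ⊢
  have h1 : P ν * A = (∏ i, c (ξs i) ν) • P ν := by
    rw [hAeq]
    exact proj_mul_spectral P horth _ ν
  have h2 : Aᴴ * P ν' = star (∏ i, c (ξs i) ν') • P ν' := by
    rw [hAeq, spectral_conjTranspose P hherm, Finset.sum_mul]
    have : ∀ ν'' ∈ Finset.univ, (star (∏ i, c (ξs i) ν'') • P ν'') * P ν' =
        if ν'' = ν' then star (∏ i, c (ξs i) ν') • P ν' else 0 := by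
      intro ν'' _
      rw [Matrix.smul_mul, horth]
      by_cases h : ν'' = ν' <;> simp [h]
    rw [Finset.sum_congr rfl this, Finset.sum_ite_eq' Finset.univ ν']
    simp
  calc P ν * (A * ρ * Aᴴ) * P ν' = (P ν * A) * ρ * (Aᴴ * P ν') := by
        simp only [Matrix.mul_assoc]
    _ = ((∏ i, c (ξs i) ν) * star (∏ i, c (ξs i) ν')) • (P ν * ρ * P ν') := by
        rw [h1, h2, Matrix.smul_mul, Matrix.smul_mul, Matrix.mul_smul, smul_smul, mul_comm]

lemma sum_abs_sq_eq_one [Fintype σ]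
    (hherm : ∀ ν, (P ν)ᴴ = P ν)
    (horth : ∀ ν ν', P ν * P ν' = if ν = ν' then P ν else 0)
    (hne : ∀ ν, P ν ≠ 0)
    (hkraus : ∑ ξ, (krausOp c P ξ)ᴴ * krausOp c P ξ = 1)
    (ν : N) : ∑ ξ, ‖c ξ ν‖ ^ 2 = 1 := by
  have expand : ∀ ξ, (krausOp c P ξ)ᴴ * krausOp c P ξ
      = ∑ ν', (star (c ξ ν') * c ξ ν') • P ν' := by
    intro ξ
    rw [krausOp, spectral_conjTranspose P hherm, spectral_mul P horth]
  have h1 : (∑ ν', (∑ ξ, star (c ξ ν') * c ξ ν') • P ν') = 1 := by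
    rw [← hkraus]
    rw [Finset.sum_congr rfl fun ξ _ => expand ξ, Finset.sum_comm]
    exact Finset.sum_congr rfl fun ν' _ => by rw [Finset.sum_smul]
  have h2 := congrArg (fun M => P ν * M) h1
  simp only [Matrix.mul_one] at h2
  rw [proj_mul_spectral P horth] at h2
  have h3 : ((∑ ξ, star (c ξ ν) * c ξ ν) - 1) • P ν = 0 := by
    rw [sub_smul, one_smul, h2, sub_self]
  rcases smul_eq_zero.mp h3 with h | h
  · have h4 : (∑ ξ, star (c ξ ν) * c ξ ν) = 1 := sub_eq_zero.mp h
    have h5 : ((∑ ξ, ‖c ξ ν‖ ^ 2 : ℝ) : ℂ) = 1 := by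
      rw [Complex.ofReal_sum, ← h4]
      refine Finset.sum_congr rfl fun ξ _ => ?_
      rw [Complex.sq_norm, Complex.star_def, Complex.normSq_eq_conj_mul_self]
    exact_mod_cast h5
  · exact absurd h (hne ν)

lemma posterior_traceNorm (hherm : ∀ ν, (P ν)ᴴ = P ν)
    (horth : ∀ ν ν', P ν * P ν' = if ν = ν' then P ν else 0)
    (hsum : ∑ ν, P ν = 1) (ρ : Matrix m m ℂ) {k : ℕ} (ξs : Fin k → σ) (ν ν' : N)
    (ht : 0 ≤ ((ordProd (krausOp c P) ξs * ρ * (ordProd (krausOp c P) ξs)ᴴ).trace).re) :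
    traceNorm (P ν * posterior c P ρ ξs * P ν') =
      (((ordProd (krausOp c P) ξs * ρ * (ordProd (krausOp c P) ξs)ᴴ).trace).re)⁻¹ *
        ((∏ i, ‖c (ξs i) ν‖) *
          ((∏ i, ‖c (ξs i) ν'‖) * traceNorm (P ν * ρ * P ν'))) := by
  unfold posterior
  rw [Matrix.mul_smul, Matrix.smul_mul, traceNorm_real_smul,
    block_formula c P hherm horth hsum ρ ξs ν ν', traceNorm_smul,
    abs_of_nonneg (inv_nonneg.mpr ht), norm_mul]
  rw [Complex.star_def, Complex.norm_conj, Complex.norm_prod, Complex.norm_prod]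
  ring

end auxSpectral

/-- decoherence of off-diagonal blocks: in the non-demolition measurement
model, for `ν ≠ ν'` the off-diagonal block `P_ν ρ⁽ᵏ⁾(ξ_1,…,ξ_k) P_{ν'}` of the posterior
state converges to `0` in norm, `μ_ω`-almost surely as `k → ∞`, where `μ_ω` is the
probability measure on infinite protocols whose cylinder probabilities are
`Tr(C_{ξ_k}⋯C_{ξ_1} ρ⁰ C_{ξ_1}ᴴ⋯C_{ξ_k}ᴴ)`. -/
theorem off_diagonal_decoherence_ae {σ N m : Type*} [Fintype σ] [DecidableEq σ]
    [Fintype N] [DecidableEq N] [Fintype m] [DecidableEq m]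
    [MeasurableSpace σ] [DiscreteMeasurableSpace σ]
    (c : σ → N → ℂ) (P : N → Matrix m m ℂ)
    (hherm : ∀ ν, (P ν)ᴴ = P ν)
    (horth : ∀ ν ν', P ν * P ν' = if ν = ν' then P ν else 0)
    (hsum : ∑ ν, P ν = 1) (hne : ∀ ν, P ν ≠ 0)
    (hkraus : ∑ ξ, (krausOp c P ξ)ᴴ * krausOp c P ξ = 1)
    (hdist : ∀ ν ν', ν ≠ ν' →
      (fun ξ => ‖c ξ ν‖ ^ 2) ≠ (fun ξ => ‖c ξ ν'‖ ^ 2))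
    (ρ : Matrix m m ℂ) (hρ : ρ.PosSemidef) (hρ1 : ρ.trace = 1)
    (μ : Measure (ℕ → σ)) [IsProbabilityMeasure μ]
    (hμ : ∀ (k : ℕ) (ξs : Fin k → σ),
      μ {x | ∀ i : Fin k, x (i : ℕ) = ξs i} =
        ENNReal.ofReal
          (((ordProd (krausOp c P) ξs * ρ * (ordProd (krausOp c P) ξs)ᴴ).trace).re)) :
    ∀ ν ν', ν ≠ ν' →
      ∀ᵐ x ∂μ, Tendsto
        (fun k => traceNorm (P ν * posterior c P ρ (fun i : Fin k => x (i : ℕ)) * P ν'))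
        atTop (𝓝 0) := by
  intro ν ν' hνν'
  classical
  set B := traceNorm (P ν * ρ * P ν') with hBdef
  have hB0 : 0 ≤ B := traceNorm_nonneg _
  set a : σ → ℝ := fun ξ => ‖c ξ ν‖ with ha
  set b : σ → ℝ := fun ξ => ‖c ξ ν'‖ with hb
  have ha0 : ∀ ξ, 0 ≤ a ξ := fun ξ => norm_nonneg _
  have hb0 : ∀ ξ, 0 ≤ b ξ := fun ξ => norm_nonneg _
  set δ : ℝ := ∑ ξ, a ξ * b ξ with hδdef
  have hδ0 : 0 ≤ δ := Finset.sum_nonneg fun ξ _ => mul_nonneg (ha0 ξ) (hb0 ξ)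
  have hsa : ∑ ξ, a ξ ^ 2 = 1 := sum_abs_sq_eq_one c P hherm horth hne hkraus ν
  have hsb : ∑ ξ, b ξ ^ 2 = 1 := sum_abs_sq_eq_one c P hherm horth hne hkraus ν'
  have hδ1 : δ < 1 := by
    obtain ⟨ξ₀, hξ₀⟩ : ∃ ξ, a ξ ^ 2 ≠ b ξ ^ 2 := by
      by_contra hcon
      push_neg at hcon
      exact hdist ν ν' hνν' (funext fun ξ => hcon ξ)
    have hab : a ξ₀ ≠ b ξ₀ := fun h => hξ₀ (by rw [h])
    have hsqpos : 0 < (a ξ₀ - b ξ₀) ^ 2 :=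
      lt_of_le_of_ne (sq_nonneg _) (Ne.symm (pow_ne_zero 2 (sub_ne_zero.mpr hab)))
    have key : δ < ∑ ξ, (a ξ ^ 2 + b ξ ^ 2) / 2 := by
      refine Finset.sum_lt_sum (fun ξ _ => by nlinarith [sq_nonneg (a ξ - b ξ)])
        ⟨ξ₀, Finset.mem_univ _, by nlinarith⟩
    have hval : ∑ ξ, (a ξ ^ 2 + b ξ ^ 2) / 2 = 1 := by
      rw [← Finset.sum_div, Finset.sum_add_distrib, hsa, hsb]
      norm_num
    linarith
  have hδE : ENNReal.ofReal δ < 1 := ENNReal.ofReal_lt_one.mpr hδ1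
  -- nonnegativity of the normalizing trace
  have ht0 : ∀ (k : ℕ) (ξs : Fin k → σ),
      0 ≤ ((ordProd (krausOp c P) ξs * ρ * (ordProd (krausOp c P) ξs)ᴴ).trace).re :=
    fun k ξs => re_trace_nonneg (hρ.mul_mul_conjTranspose_same _)
  -- the ENNReal-valued block-norm process
  set F : ℕ → (ℕ → σ) → ENNReal := fun k x =>
    ENNReal.ofReal (traceNorm (P ν * posterior c P ρ (fun i : Fin k => x (i : ℕ)) * P ν'))
    with hFdef
  set v : ∀ k : ℕ, (Fin k → σ) → ENNReal := fun k ξs =>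
    ENNReal.ofReal (traceNorm (P ν * posterior c P ρ ξs * P ν')) with hvdef
  have hcyl : ∀ (k : ℕ) (ξs : Fin k → σ),
      MeasurableSet {x : ℕ → σ | ∀ i : Fin k, x (i : ℕ) = ξs i} := by
    intro k ξs
    have : {x : ℕ → σ | ∀ i : Fin k, x (i : ℕ) = ξs i}
        = ⋂ i : Fin k, (fun x : ℕ → σ => x (i : ℕ)) ⁻¹' {ξs i} := by
      ext x
      simp [Set.mem_iInter]
    rw [this]
    exact MeasurableSet.iInter fun i =>
      (measurable_pi_apply _) (measurableSet_singleton _)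
  have hmeas : ∀ k, Measurable (F k) := by
    intro k
    have : F k = (fun ξs : Fin k → σ => v k ξs) ∘ (fun x (i : Fin k) => x (i : ℕ)) := rfl
    rw [this]
    exact (measurable_of_countable _).comp
      (measurable_pi_lambda _ fun i => measurable_pi_apply _)
  have hFdecomp : ∀ (k : ℕ) (x : ℕ → σ), F k x =
      ∑ ξs : Fin k → σ,
        Set.indicator {y : ℕ → σ | ∀ i : Fin k, y (i : ℕ) = ξs i} (fun _ => v k ξs) x := by
    intro k x
    have step : ∀ ξs : Fin k → σ,
        Set.indicator {y : ℕ → σ | ∀ i : Fin k, y (i : ℕ) = ξs i} (fun _ => v k ξs) x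
          = if ξs = (fun i : Fin k => x (i : ℕ)) then v k ξs else 0 := by
      intro ξs
      by_cases h : ξs = fun i : Fin k => x (i : ℕ)
      · have hx : x ∈ {y : ℕ → σ | ∀ i : Fin k, y (i : ℕ) = ξs i} := by
          intro i
          rw [h]
        simp [Set.indicator_of_mem hx, h]
      · have hx : x ∉ {y : ℕ → σ | ∀ i : Fin k, y (i : ℕ) = ξs i} := by
          intro hx
          exact h (funext fun i => (hx i).symm)
        simp [Set.indicator_of_notMem hx, h]
    rw [Finset.sum_congr rfl fun ξs _ => step ξs,
      Finset.sum_ite_eq' Finset.univ (fun i : Fin k => x (i : ℕ)) (v k)]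
    simp [hFdef, hvdef]
  -- the key expectation bound
  have hterm : ∀ (k : ℕ) (ξs : Fin k → σ),
      v k ξs * μ {y : ℕ → σ | ∀ i : Fin k, y (i : ℕ) = ξs i}
        ≤ ENNReal.ofReal ((∏ i, a (ξs i) * b (ξs i)) * B) := by
    intro k ξs
    rw [hμ k ξs, hvdef]
    rw [← ENNReal.ofReal_mul (traceNorm_nonneg _)]
    apply ENNReal.ofReal_le_ofReal
    rw [posterior_traceNorm c P hherm horth hsum ρ ξs ν ν' (ht0 k ξs)]
    rcases eq_or_lt_of_le (ht0 k ξs) with h | h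
    · rw [← h]
      simp only [_root_.inv_zero, mul_zero, zero_mul]
      refine mul_nonneg (Finset.prod_nonneg fun i _ => mul_nonneg (ha0 _) (hb0 _)) hB0
    · rw [mul_comm _ ((ordProd (krausOp c P) ξs * ρ *
        (ordProd (krausOp c P) ξs)ᴴ).trace.re), ← mul_assoc, mul_inv_cancel₀ (ne_of_gt h),
        one_mul, Finset.prod_mul_distrib, ← hBdef]
      exact le_of_eq (by ring)
  have hint : ∀ k : ℕ, ∫⁻ x, F k x ∂μ ≤ ENNReal.ofReal (δ ^ k * B) := by
    intro k
    have heval : ∫⁻ x, F k x ∂μ =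
        ∑ ξs : Fin k → σ, v k ξs * μ {y : ℕ → σ | ∀ i : Fin k, y (i : ℕ) = ξs i} := by
      calc ∫⁻ x, F k x ∂μ
          = ∫⁻ x, ∑ ξs : Fin k → σ,
              Set.indicator {y : ℕ → σ | ∀ i : Fin k, y (i : ℕ) = ξs i}
                (fun _ => v k ξs) x ∂μ := by
            exact lintegral_congr fun x => hFdecomp k x
        _ = ∑ ξs : Fin k → σ, ∫⁻ x,
              Set.indicator {y : ℕ → σ | ∀ i : Fin k, y (i : ℕ) = ξs i}
                (fun _ => v k ξs) x ∂μ := by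
            exact lintegral_finset_sum _ fun ξs _ =>
              measurable_const.indicator (hcyl k ξs)
        _ = ∑ ξs : Fin k → σ, v k ξs * μ {y : ℕ → σ | ∀ i : Fin k, y (i : ℕ) = ξs i} := by
            exact Finset.sum_congr rfl fun ξs _ => lintegral_indicator_const (hcyl k ξs) _
    rw [heval]
    calc ∑ ξs : Fin k → σ, v k ξs * μ {y : ℕ → σ | ∀ i : Fin k, y (i : ℕ) = ξs i}
        ≤ ∑ ξs : Fin k → σ, ENNReal.ofReal ((∏ i, a (ξs i) * b (ξs i)) * B) :=
          Finset.sum_le_sum fun ξs _ => hterm k ξs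
      _ = ENNReal.ofReal (∑ ξs : Fin k → σ, (∏ i, a (ξs i) * b (ξs i)) * B) := by
          rw [ENNReal.ofReal_sum_of_nonneg fun ξs _ =>
            mul_nonneg (Finset.prod_nonneg fun i _ => mul_nonneg (ha0 _) (hb0 _)) hB0]
      _ = ENNReal.ofReal (δ ^ k * B) := by
          congr 1
          rw [← Finset.sum_mul]
          congr 1
          rw [hδdef]
          calc ∑ ξs : Fin k → σ, ∏ i, a (ξs i) * b (ξs i)
              = ∏ _i : Fin k, ∑ ξ, a ξ * b ξ := by
                rw [Finset.prod_univ_sum]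
                rw [Fintype.piFinset_univ]
            _ = (∑ ξ, a ξ * b ξ) ^ k := by
                rw [Finset.prod_const, Finset.card_univ, Fintype.card_fin]
  have htsum : ∑' k : ℕ, ∫⁻ x, F k x ∂μ < ⊤ := by
    have hle : ∑' k : ℕ, ∫⁻ x, F k x ∂μ
        ≤ ∑' k : ℕ, ENNReal.ofReal B * ENNReal.ofReal δ ^ k := by
      refine ENNReal.tsum_le_tsum fun k => le_trans (hint k) (le_of_eq ?_)
      rw [ENNReal.ofReal_mul (pow_nonneg hδ0 k), ENNReal.ofReal_pow hδ0, mul_comm]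
    refine lt_of_le_of_lt hle ?_
    rw [ENNReal.tsum_mul_left, ENNReal.tsum_geometric]
    exact ENNReal.mul_lt_top ENNReal.ofReal_lt_top
      (ENNReal.inv_lt_top.mpr (tsub_pos_iff_lt.mpr hδE))
  have h1 : ∫⁻ x, ∑' k, F k x ∂μ < ⊤ := by
    rw [lintegral_tsum fun k => (hmeas k).aemeasurable]
    exact htsum
  have h2 : ∀ᵐ x ∂μ, ∑' k, F k x < ⊤ :=
    ae_lt_top (Measurable.ennreal_tsum hmeas) h1.ne
  filter_upwards [h2] with x hx
  have hsummable := ENNReal.summable_toReal hx.ne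
  have heq : (fun k => (F k x).toReal) =
      fun k => traceNorm (P ν * posterior c P ρ (fun i : Fin k => x (i : ℕ)) * P ν') :=
    funext fun k => ENNReal.toReal_ofReal (traceNorm_nonneg _)
  rw [heq] at hsummable
  exact hsummable.tendsto_atTop_zero
end

section
/- Posterior concentration estimate: in the non-demolition model with μ̃(ξ_1,…,ξ_n|ν) = Π_i p(ξ_i|ν), p(ξ|ν)>0 for all ξ,ν, and posterior weights Tr(Π_{ν'} ρ̃^{(n)}) = Tr(Π_{ν'}ρ⁰)·μ̃(ξ^{(n)}|ν')/μ̃(ξ^{(n)}), the following identity and bound hold: μ̃(ξ^{(n)}|ν') / μ̃(ξ^{(n)}|ν) = exp(n·I_{p_ν}(f^{(n)}) − n·I_{p_{ν'}}(f^{(n)})), where f^{(n)} is the empirical distribution of (ξ_1,…,ξ_n); consequently, if Tr(Π_ν ρ⁰) > 0 and I_{p_ν}(f^{(n)}) ≤ δ/2 while I_{p_{ν'}}(f^{(n)}) ≥ min_{ν≠ν''} I_{p_ν}(p_{ν''}) − δ/2, then Tr(Π_{ν'} ρ̃^{(n)}) ≤ (Tr(Π_{ν'}ρ⁰)/Tr(Π_ν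 ρ⁰))·exp(−n(min_{ν≠ν''}I_{p_ν}(p_{ν''}) − δ)). -/
open scoped BigOperators

/-- Real-valued relative entropy `I_pref(q) = ∑ q ξ * log (q ξ / pref ξ)`. -/
noncomputable def relEntR {σ : Type*} [Fintype σ] (q pref : σ → ℝ) : ℝ :=
  ∑ ξ, q ξ * Real.log (q ξ / pref ξ)

/-- Empirical distribution of the finite protocol `ξs : Fin n → σ`. -/
noncomputable def empFreq {σ : Type*} [DecidableEq σ] {n : ℕ} (ξs : Fin n → σ) (ξ : σ) : ℝ :=
  (Finset.univ.filter (fun j : Fin n => ξs j = ξ)).card / n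

/-- The minimal pairwise relative entropy `min_{ν ≠ ν'} I_{p_ν}(p_{ν'})`. -/
noncomputable def minRelEnt {σ N : Type*} [Fintype σ] (p : σ → N → ℝ) : ℝ :=
  sInf {r : ℝ | ∃ ν₁ ν₂ : N, ν₁ ≠ ν₂ ∧
    r = relEntR (fun ξ => p ξ ν₂) (fun ξ => p ξ ν₁)}

lemma count_sum_aux {σ : Type*} [Fintype σ] [DecidableEq σ] (n : ℕ) (ξs : Fin n → σ) (g : σ → ℝ) :
    ∑ ξ, ((Finset.univ.filter (fun j : Fin n => ξs j = ξ)).card : ℝ) * g ξ = ∑ i, g (ξs i) := by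
  rw [← Finset.sum_fiberwise Finset.univ ξs (fun i => g (ξs i))]
  refine Finset.sum_congr rfl fun ξ _ => ?_
  rw [Finset.sum_congr rfl (fun i hi => by rw [(Finset.mem_filter.mp hi).2])]
  simp [mul_comm]

lemma key_aux {σ : Type*} [Fintype σ] [DecidableEq σ] (n : ℕ) (ξs : Fin n → σ)
    (pref : σ → ℝ) (hpref : ∀ ξ, 0 < pref ξ) :
    (n : ℝ) * relEntR (empFreq ξs) pref
      = (∑ ξ, ((Finset.univ.filter (fun j : Fin n => ξs j = ξ)).card : ℝ)
            * Real.log (empFreq ξs ξ))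
        - ∑ i, Real.log (pref (ξs i)) := by
  rw [← count_sum_aux n ξs (fun ξ => Real.log (pref ξ)), relEntR, Finset.mul_sum,
    ← Finset.sum_sub_distrib]
  refine Finset.sum_congr rfl fun ξ _ => ?_
  set c : ℕ := (Finset.univ.filter (fun j : Fin n => ξs j = ξ)).card with hc
  rcases Nat.eq_zero_or_pos c with h0 | hpos
  · simp [empFreq, ← hc, h0]
  · have hn : 0 < n := by
      rcases Finset.card_pos.mp hpos with ⟨i, _⟩
      exact i.pos
    have hf : empFreq ξs ξ = (c : ℝ) / n := rfl
    have hfpos : 0 < empFreq ξs ξ := by rw [hf]; positivity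
    have hnf : (n : ℝ) * empFreq ξs ξ = (c : ℝ) := by
      rw [hf]; field_simp
    rw [Real.log_div (ne_of_gt hfpos) (ne_of_gt (hpref ξ))]
    have : (n : ℝ) * (empFreq ξs ξ * (Real.log (empFreq ξs ξ) - Real.log (pref ξ)))
        = ((n : ℝ) * empFreq ξs ξ) * Real.log (empFreq ξs ξ)
          - ((n : ℝ) * empFreq ξs ξ) * Real.log (pref ξ) := by ring
    rw [this, hnf]

/-- posterior concentration estimate: in the non-demolition model with
likelihoods `μ̃(ξ^{(n)}|ν) = ∏ᵢ p(ξᵢ|ν)` (all `p(ξ|ν) > 0`), one has the identity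
`μ̃(ξ^{(n)}|ν')/μ̃(ξ^{(n)}|ν) = exp(n I_{p_ν}(f⁽ⁿ⁾) − n I_{p_{ν'}}(f⁽ⁿ⁾))`; consequently,
if `Tr(Π_ν ρ⁰) = w ν > 0`, `I_{p_ν}(f⁽ⁿ⁾) ≤ δ/2` and
`I_{p_{ν'}}(f⁽ⁿ⁾) ≥ min_{ν≠ν''} I_{p_ν}(p_{ν''}) − δ/2`, then the posterior weight of `ν'`
satisfies `Tr(Π_{ν'} ρ̃⁽ⁿ⁾) ≤ (w ν'/w ν) exp(−n(min I − δ))`. -/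
theorem posterior_concentration {σ N : Type*} [Fintype σ] [DecidableEq σ]
    [Fintype N] [Nontrivial N]
    (p : σ → N → ℝ) (hp : ∀ ξ ν, 0 < p ξ ν) (hp1 : ∀ ν, ∑ ξ, p ξ ν = 1)
    (hdist : ∀ ν ν', ν ≠ ν' → (fun ξ => p ξ ν) ≠ (fun ξ => p ξ ν'))
    (w : N → ℝ) (hw0 : ∀ ν, 0 ≤ w ν) (hw1 : ∑ ν, w ν = 1)
    (n : ℕ) (ξs : Fin n → σ) :
    (∀ ν ν' : N,
      (∏ i, p (ξs i) ν') / (∏ i, p (ξs i) ν) =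
        Real.exp ((n : ℝ) * relEntR (empFreq ξs) (fun ξ => p ξ ν) -
          (n : ℝ) * relEntR (empFreq ξs) (fun ξ => p ξ ν'))) ∧
    (∀ δ : ℝ, 0 < δ → δ < minRelEnt p →
      ∀ ν ν' : N, ν ≠ ν' → 0 < w ν →
        relEntR (empFreq ξs) (fun ξ => p ξ ν) ≤ δ / 2 →
        minRelEnt p - δ / 2 ≤ relEntR (empFreq ξs) (fun ξ => p ξ ν') →
        w ν' * (∏ i, p (ξs i) ν') / (∑ ν'', w ν'' * ∏ i, p (ξs i) ν'') ≤
          (w ν' / w ν) * Real.exp (-(n : ℝ) * (minRelEnt p - δ))) := by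
  have hprod : ∀ ν, (∏ i, p (ξs i) ν) = Real.exp (∑ i, Real.log (p (ξs i) ν)) := by
    intro ν
    rw [Real.exp_sum]
    exact Finset.prod_congr rfl fun i _ => (Real.exp_log (hp _ ν)).symm
  have hratio : ∀ ν ν' : N,
      (∏ i, p (ξs i) ν') / (∏ i, p (ξs i) ν) =
        Real.exp ((n : ℝ) * relEntR (empFreq ξs) (fun ξ => p ξ ν) -
          (n : ℝ) * relEntR (empFreq ξs) (fun ξ => p ξ ν')) := by
    intro ν ν'
    rw [hprod ν, hprod ν', ← Real.exp_sub,
      key_aux n ξs (fun ξ => p ξ ν) (fun ξ => hp ξ ν),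
      key_aux n ξs (fun ξ => p ξ ν') (fun ξ => hp ξ ν')]
    ring_nf
  refine ⟨hratio, ?_⟩
  intro δ hδ hδmin ν ν' hne hwν h1 h2
  have hA : 0 < ∏ i, p (ξs i) ν := Finset.prod_pos fun i _ => hp _ _
  have hB : 0 < ∏ i, p (ξs i) ν' := Finset.prod_pos fun i _ => hp _ _
  have hZ : w ν * ∏ i, p (ξs i) ν ≤ ∑ ν'', w ν'' * ∏ i, p (ξs i) ν'' := by
    refine Finset.single_le_sum (f := fun ν'' => w ν'' * ∏ i, p (ξs i) ν'')
      (fun ν'' _ => ?_) (Finset.mem_univ ν)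
    exact mul_nonneg (hw0 ν'') (le_of_lt (Finset.prod_pos fun i _ => hp _ _))
  have hZpos : 0 < w ν * ∏ i, p (ξs i) ν := mul_pos hwν hA
  have step1 : w ν' * (∏ i, p (ξs i) ν') / (∑ ν'', w ν'' * ∏ i, p (ξs i) ν'') ≤
      w ν' * (∏ i, p (ξs i) ν') / (w ν * ∏ i, p (ξs i) ν) :=
    div_le_div_of_nonneg_left (mul_nonneg (hw0 ν') (le_of_lt hB)) hZpos hZ
    |>.trans_eq rfl
  refine le_trans step1 ?_
  have heq : w ν' * (∏ i, p (ξs i) ν') / (w ν * ∏ i, p (ξs i) ν)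
      = (w ν' / w ν) * ((∏ i, p (ξs i) ν') / (∏ i, p (ξs i) ν)) :=
    (div_mul_div_comm (w ν') (w ν) _ _).symm
  rw [heq, hratio ν ν']
  refine mul_le_mul_of_nonneg_left ?_ (div_nonneg (hw0 ν') (le_of_lt hwν))
  refine Real.exp_le_exp.mpr ?_
  have hn : (0 : ℝ) ≤ n := Nat.cast_nonneg n
  nlinarith [mul_le_mul_of_nonneg_left h1 hn, mul_le_mul_of_nonneg_left h2 hn]
end
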